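/- Let g be a non-identity permutation of a point set X of size n. Then the number of Steiner triple systems on X admitting g as an automorphism is at most (8ne/5)^{5n²/48}. -/

import Mathlib

/-- A Steiner triple system on the point set `Fin n`: a collection of
3-element blocks such that every 2-element subset of points lies in exactly
one block. -/
def IsSTS (n : ℕ) (B : Finset (Finset (Fin n))) : Prop :=
  (∀ b ∈ B, b.card = 3) ∧
  ∀ p : Finset (Fin n), p.card = 2 → ∃! b, b ∈ B ∧ p ⊆ b

/-- `g` is an automorphism of the Steiner triple system `B`: the image of
every block is a block. -/
def IsSTSAuto (n : ℕ) (B : Finset (Finset (Fin n))) (g : Equiv.Perm (Fin n)) : Prop :=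
  ∀ b ∈ B, b.image g ∈ B

namespace STSCount

variable {n : ℕ}

/-- The orbit of a block under the cyclic group generated by `g`. -/
noncomputable def orbF (g : Equiv.Perm (Fin n)) (b : Finset (Fin n)) : Finset (Finset (Fin n)) :=
  (Finset.range (orderOf g)).image (fun k => b.image ⇑(g ^ k))

lemma mem_orbF_iff {g : Equiv.Perm (Fin n)} {b c : Finset (Fin n)} :
    c ∈ orbF g b ↔ ∃ k : ℕ, b.image ⇑(g ^ k) = c := by
  constructor
  · rintro h
    rcases Finset.mem_image.1 h with ⟨k, -, rfl⟩
    exact ⟨k, rfl⟩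
  · rintro ⟨k, rfl⟩
    refine Finset.mem_image.2 ⟨k % orderOf g, Finset.mem_range.2 (Nat.mod_lt _ (orderOf_pos g)), ?_⟩
    rw [pow_mod_orderOf]

lemma self_mem_orbF {g : Equiv.Perm (Fin n)} {b : Finset (Fin n)} : b ∈ orbF g b :=
  mem_orbF_iff.2 ⟨0, by simp⟩

lemma image_pow_mem_orbF {g : Equiv.Perm (Fin n)} {b c : Finset (Fin n)} (hc : c ∈ orbF g b)
    (j : ℕ) : c.image ⇑(g ^ j) ∈ orbF g b := by
  rcases mem_orbF_iff.1 hc with ⟨k, rfl⟩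
  refine mem_orbF_iff.2 ⟨j + k, ?_⟩
  rw [pow_add, Equiv.Perm.coe_mul, ← Finset.image_image]

lemma mem_orbF_symm {g : Equiv.Perm (Fin n)} {b c : Finset (Fin n)} (hc : c ∈ orbF g b) :
    b ∈ orbF g c := by
  rcases mem_orbF_iff.1 hc with ⟨k, rfl⟩
  refine mem_orbF_iff.2 ⟨orderOf g - k % orderOf g, ?_⟩
  rw [← pow_mod_orderOf g k, Finset.image_image, ← Equiv.Perm.coe_mul, ← pow_add,
    Nat.sub_add_cancel (le_of_lt (Nat.mod_lt _ (orderOf_pos g))), pow_orderOf_eq_one]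
  simp

lemma orbF_subset_orbF {g : Equiv.Perm (Fin n)} {b c : Finset (Fin n)} (hc : c ∈ orbF g b) :
    orbF g c ⊆ orbF g b := by
  intro d hd
  rcases mem_orbF_iff.1 hd with ⟨j, rfl⟩
  exact image_pow_mem_orbF hc j

lemma orbF_eq_of_mem {g : Equiv.Perm (Fin n)} {b c : Finset (Fin n)} (hc : c ∈ orbF g b) :
    orbF g c = orbF g b :=
  le_antisymm (orbF_subset_orbF hc) (orbF_subset_orbF (mem_orbF_symm hc))

lemma image_orbF_eq_singleton {g : Equiv.Perm (Fin n)} (b : Finset (Fin n)) :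
    (orbF g b).image (orbF g) = {orbF g b} := by
  refine Finset.eq_singleton_iff_unique_mem.2 ⟨Finset.mem_image_of_mem _ self_mem_orbF, ?_⟩
  intro x hx
  rcases Finset.mem_image.1 hx with ⟨c, hc, rfl⟩
  exact orbF_eq_of_mem hc

/-- A set of blocks closed under `g`. -/
def GClosed (g : Equiv.Perm (Fin n)) (C : Finset (Finset (Fin n))) : Prop :=
  ∀ c ∈ C, c.image ⇑g ∈ C

lemma GClosed.image_pow {g : Equiv.Perm (Fin n)} {C : Finset (Finset (Fin n))}
    (hC : GClosed g C) {c : Finset (Fin n)} (hc : c ∈ C) (k : ℕ) : c.image ⇑(g ^ k) ∈ C := by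
  induction k with
  | zero => simpa using hc
  | succ k ih =>
    have := hC _ ih
    rwa [Finset.image_image, ← Equiv.Perm.coe_mul, ← pow_succ'] at this

lemma GClosed.orbF_subset {g : Equiv.Perm (Fin n)} {C : Finset (Finset (Fin n))}
    (hC : GClosed g C) {c : Finset (Fin n)} (hc : c ∈ C) : orbF g c ⊆ C := by
  intro d hd
  rcases mem_orbF_iff.1 hd with ⟨k, rfl⟩
  exact hC.image_pow hc k

lemma GClosed.union_orbF {g : Equiv.Perm (Fin n)} {C : Finset (Finset (Fin n))}
    (hC : GClosed g C) (b : Finset (Fin n)) : GClosed g (C ∪ orbF g b) := by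
  intro c hc
  rcases Finset.mem_union.1 hc with h | h
  · exact Finset.mem_union_left _ (hC _ h)
  · refine Finset.mem_union_right _ ?_
    have := image_pow_mem_orbF h 1
    simpa using this

end STSCount

namespace STSCount

variable {n : ℕ}

/-- The third point of block `b` beyond the pair `p`. -/
noncomputable def third (e0 : Fin n) (b p : Finset (Fin n)) : Fin n :=
  if h : (b \ p).Nonempty then (b \ p).min' h else e0

lemma insert_third {e0 : Fin n} {b p : Finset (Fin n)} (hpb : p ⊆ b) (hp : p.card = 2)
    (hb : b.card = 3) : insert (third e0 b p) p = b := by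
  have hcard : (b \ p).card = 1 := by
    rw [Finset.card_sdiff_of_subset hpb, hb, hp]
  have hne : (b \ p).Nonempty := by
    rw [← Finset.card_pos, hcard]; norm_num
  have hmem : third e0 b p ∈ b \ p := by
    rw [third, dif_pos hne]; exact Finset.min'_mem _ _
  have hnotp : third e0 b p ∉ p := (Finset.mem_sdiff.1 hmem).2
  have hsub : insert (third e0 b p) p ⊆ b :=
    Finset.insert_subset (Finset.mem_sdiff.1 hmem).1 hpb
  refine Finset.eq_of_subset_of_card_le hsub ?_
  rw [Finset.card_insert_of_notMem hnotp, hp, hb]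

variable (g : Equiv.Perm (Fin n))

/-- Encoding: walk through the list of pairs; at each pair not yet covered by the
current set `C` of revealed blocks, emit the third point of its block in `Bl` and
reveal the whole orbit of that block. -/
noncomputable def enc (e0 : Fin n) (Bl : Finset (Finset (Fin n))) :
    List (Finset (Fin n)) → Finset (Finset (Fin n)) → List (Fin n)
  | [], _ => []
  | p :: ps, C =>
    if ∃ b ∈ C, p ⊆ b then enc e0 Bl ps C
    else
      let b := if h2 : ∃ b ∈ Bl, p ⊆ b then h2.choose else ∅
      third e0 b p :: enc e0 Bl ps (C ∪ orbF g b)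

/-- Decoding. -/
noncomputable def dec :
    List (Finset (Fin n)) → List (Fin n) → Finset (Finset (Fin n)) → Finset (Finset (Fin n))
  | [], _, C => C
  | p :: ps, s, C =>
    if ∃ b ∈ C, p ⊆ b then dec ps s C
    else
      match s with
      | [] => C
      | z :: s' => dec ps s' (C ∪ orbF g (insert z p))

@[simp] lemma enc_nil (e0 : Fin n) (Bl C) : enc g e0 Bl [] C = [] := rfl

lemma enc_cons (e0 : Fin n) (Bl) (p : Finset (Fin n)) (ps C) :
    enc g e0 Bl (p :: ps) C =
      if ∃ b ∈ C, p ⊆ b then enc g e0 Bl ps C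
      else
        (third e0 (if h2 : ∃ b ∈ Bl, p ⊆ b then h2.choose else ∅) p) ::
          enc g e0 Bl ps (C ∪ orbF g (if h2 : ∃ b ∈ Bl, p ⊆ b then h2.choose else ∅)) := rfl

@[simp] lemma dec_nil (s C) : dec g [] s C = C := rfl

lemma dec_cons (p : Finset (Fin n)) (ps s C) :
    dec g (p :: ps) s C =
      if ∃ b ∈ C, p ⊆ b then dec g ps s C
      else
        match s with
        | [] => C
        | z :: s' => dec g ps s' (C ∪ orbF g (insert z p)) := rfl

end STSCount
namespace STSCount

variable {n : ℕ} (g : Equiv.Perm (Fin n))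

lemma blk_unique {B : Finset (Finset (Fin n))} (hB : IsSTS n B) {p b c : Finset (Fin n)}
    (hp : p.card = 2) (hb : b ∈ B) (hpb : p ⊆ b) (hc : c ∈ B) (hpc : p ⊆ c) : b = c :=
  (hB.2 p hp).unique ⟨hb, hpb⟩ ⟨hc, hpc⟩

lemma dec_enc (e0 : Fin n) {B : Finset (Finset (Fin n))} (hB : IsSTS n B)
    (hauto : IsSTSAuto n B g) :
    ∀ (ps : List (Finset (Fin n))) (C : Finset (Finset (Fin n))) (r : List (Fin n)),
      (∀ p ∈ ps, p.card = 2) → C ⊆ B → GClosed g C →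
      (∀ b ∈ B, b ∉ C → ∃ p ∈ ps, p ⊆ b) →
      dec g ps (enc g e0 B ps C ++ r) C = B := by
  intro ps
  induction ps with
  | nil =>
    intro C r _ hCB _ hcov
    simp only [enc_nil, dec_nil]
    refine Finset.Subset.antisymm hCB (fun b hb => ?_)
    by_contra hbC
    rcases hcov b hb hbC with ⟨p, hp, -⟩
    exact absurd hp (List.not_mem_nil)
  | cons p ps ih =>
    intro C r hps hCB hCg hcov
    have hp2 : p.card = 2 := hps p (List.mem_cons_self)
    by_cases h : ∃ b ∈ C, p ⊆ b
    · rw [enc_cons, if_pos h, dec_cons, if_pos h]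
      refine ih C r (fun q hq => hps q (List.mem_cons_of_mem _ hq)) hCB hCg ?_
      intro b hb hbC
      rcases hcov b hb hbC with ⟨q, hq, hqb⟩
      rcases List.mem_cons.1 hq with rfl | hq'
      · rcases h with ⟨c, hcC, hpc⟩
        exact absurd (blk_unique hB hp2 hb hqb (hCB hcC) hpc ▸ hcC) hbC
      · exact ⟨q, hq', hqb⟩
    · have h2 : ∃ b ∈ B, p ⊆ b := (hB.2 p hp2).exists
      have hbspec := h2.choose_spec
      set b := h2.choose with hbdef
      rw [enc_cons, if_neg h, dif_pos h2, dec_cons, if_neg h]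
      show dec g ps _ (C ∪ orbF g (insert (third e0 b p) p)) = B
      rw [insert_third hbspec.2 hp2 (hB.1 b hbspec.1)]
      have hBg : GClosed g B := hauto
      refine ih (C ∪ orbF g b) r (fun q hq => hps q (List.mem_cons_of_mem _ hq))
        (Finset.union_subset hCB (hBg.orbF_subset hbspec.1)) (hCg.union_orbF b) ?_
      intro b' hb' hb'C
      have hb'notC : b' ∉ C := fun hx => hb'C (Finset.mem_union_left _ hx)
      rcases hcov b' hb' hb'notC with ⟨q, hq, hqb⟩
      rcases List.mem_cons.1 hq with rfl | hq'
      · have : b' = b := blk_unique hB hp2 hb' hqb hbspec.1 hbspec.2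
        exact absurd (Finset.mem_union_right _ (this ▸ self_mem_orbF)) hb'C
      · exact ⟨q, hq', hqb⟩

lemma enc_length (e0 : Fin n) {B : Finset (Finset (Fin n))} (hB : IsSTS n B)
    (hauto : IsSTSAuto n B g) :
    ∀ (ps : List (Finset (Fin n))) (C : Finset (Finset (Fin n))),
      (∀ p ∈ ps, p.card = 2) → C ⊆ B → GClosed g C →
      (enc g e0 B ps C).length + (C.image (orbF g)).card ≤ (B.image (orbF g)).card := by
  intro ps
  induction ps with
  | nil =>
    intro C _ hCB _
    simpa using Finset.card_le_card (Finset.image_subset_image hCB)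
  | cons p ps ih =>
    intro C hps hCB hCg
    have hp2 : p.card = 2 := hps p (List.mem_cons_self)
    by_cases h : ∃ b ∈ C, p ⊆ b
    · rw [enc_cons, if_pos h]
      exact ih C (fun q hq => hps q (List.mem_cons_of_mem _ hq)) hCB hCg
    · have h2 : ∃ b ∈ B, p ⊆ b := (hB.2 p hp2).exists
      have hbspec := h2.choose_spec
      set b := h2.choose with hbdef
      rw [enc_cons, if_neg h, dif_pos h2, ← hbdef]
      have hBg : GClosed g B := hauto
      have hC'B : C ∪ orbF g b ⊆ B :=
        Finset.union_subset hCB (hBg.orbF_subset hbspec.1)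
      have hnot : orbF g b ∉ C.image (orbF g) := by
        intro hx
        rcases Finset.mem_image.1 hx with ⟨c, hcC, hc⟩
        have : b ∈ C := hCg.orbF_subset hcC (hc ▸ self_mem_orbF)
        exact h ⟨b, this, hbspec.2⟩
      have himg : (C ∪ orbF g b).image (orbF g) = insert (orbF g b) (C.image (orbF g)) := by
        rw [Finset.image_union, image_orbF_eq_singleton, Finset.union_comm _ ({orbF g b} : Finset _),
          ← Finset.insert_eq]
      have hstep := ih (C ∪ orbF g b) (fun q hq => hps q (List.mem_cons_of_mem _ hq)) hC'B
        (hCg.union_orbF b)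
      rw [himg, Finset.card_insert_of_notMem hnot] at hstep
      simp only [List.length_cons]
      omega

end STSCount
namespace STSCount

variable {n : ℕ} (g : Equiv.Perm (Fin n))

/-- The fixed list of all pairs. -/
noncomputable def pairList (n : ℕ) : List (Finset (Fin n)) :=
  ((Finset.univ : Finset (Fin n)).powersetCard 2).toList

lemma pairList_card : ∀ p ∈ pairList n, p.card = 2 := fun p hp =>
  (Finset.mem_powersetCard.1 (Finset.mem_toList.1 hp)).2

lemma pairList_cov {b : Finset (Fin n)} (hb : b.card = 3) : ∃ p ∈ pairList n, p ⊆ b := by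
  obtain ⟨p, hpb, hp⟩ := Finset.exists_subset_card_eq (show 2 ≤ b.card by omega)
  exact ⟨p, Finset.mem_toList.2 (Finset.mem_powersetCard.2 ⟨Finset.subset_univ _, hp⟩), hpb⟩

/-- The code of a Steiner triple system. -/
noncomputable def code (e0 : Fin n) (B : Finset (Finset (Fin n))) : List (Fin n) :=
  enc g e0 B (pairList n) ∅

lemma code_dec (e0 : Fin n) {B : Finset (Finset (Fin n))} (hB : IsSTS n B)
    (hauto : IsSTSAuto n B g) (r : List (Fin n)) :
    dec g (pairList n) (code g e0 B ++ r) ∅ = B := by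
  refine dec_enc g e0 hB hauto (pairList n) ∅ r pairList_card (Finset.empty_subset _)
    (fun c hc => absurd hc (Finset.notMem_empty c)) ?_
  intro b hb _
  exact pairList_cov (hB.1 b hb)

lemma code_length (e0 : Fin n) {B : Finset (Finset (Fin n))} (hB : IsSTS n B)
    (hauto : IsSTSAuto n B g) :
    (code g e0 B).length ≤ (B.image (orbF g)).card := by
  have := enc_length g e0 hB hauto (pairList n) ∅ pairList_card (Finset.empty_subset _)
    (fun c hc => absurd hc (Finset.notMem_empty c))
  simpa [code] using this

lemma card_le_pow (e0 : Fin n) (L : ℕ)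
    (hL : ∀ B : Finset (Finset (Fin n)), IsSTS n B → IsSTSAuto n B g →
      (B.image (orbF g)).card ≤ L) :
    Nat.card {B : Finset (Finset (Fin n)) // IsSTS n B ∧ IsSTSAuto n B g} ≤ n ^ L := by
  have key : ∀ B₁ B₂ : {B : Finset (Finset (Fin n)) // IsSTS n B ∧ IsSTSAuto n B g},
      (fun i : Fin L => (code g e0 B₁.1).getD (i : ℕ) e0) =
        (fun i : Fin L => (code g e0 B₂.1).getD (i : ℕ) e0) →
      (code g e0 B₁.1).length ≤ (code g e0 B₂.1).length → B₁.1 = B₂.1 := by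
    rintro ⟨B₁, h₁, h₁'⟩ ⟨B₂, h₂, h₂'⟩ heq hlen
    simp only at heq hlen ⊢
    set l₁ := code g e0 B₁ with hl₁
    set l₂ := code g e0 B₂ with hl₂
    have hlen₁ : l₁.length ≤ L := le_trans (code_length g e0 h₁ h₁') (hL B₁ h₁ h₁')
    have htake : l₂.take l₁.length = l₁ := by
      apply List.ext_getElem
      · rw [List.length_take]
        omega
      · intro i hi1 hi2
        have hi : i < l₁.length := by simpa using hi2
        have hiL : i < L := lt_of_lt_of_le hi hlen₁
        have := congrFun heq ⟨i, hiL⟩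
        simp only [List.getD_eq_getElem?_getD] at this
        rw [List.getElem_take]
        rw [List.getElem?_eq_getElem hi, List.getElem?_eq_getElem (lt_of_lt_of_le hi hlen)]
          at this
        simpa using this.symm
    have hsplit : l₁ ++ l₂.drop l₁.length = l₂ ++ [] := by
      conv_rhs => rw [List.append_nil, ← List.take_append_drop l₁.length l₂]
      rw [htake]
    calc B₁ = dec g (pairList n) (l₁ ++ l₂.drop l₁.length) ∅ := (code_dec g e0 h₁ h₁' _).symm
      _ = dec g (pairList n) (l₂ ++ []) ∅ := by rw [hsplit]
      _ = B₂ := code_dec g e0 h₂ h₂' []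
  have hinj : Function.Injective
      (fun B : {B : Finset (Finset (Fin n)) // IsSTS n B ∧ IsSTSAuto n B g} =>
        (fun i : Fin L => (code g e0 B.1).getD (i : ℕ) e0)) := by
    intro B₁ B₂ h
    rcases le_total (code g e0 B₁.1).length (code g e0 B₂.1).length with hle | hle
    · exact Subtype.ext (key B₁ B₂ h hle)
    · exact Subtype.ext ((key B₂ B₁ h.symm hle).symm)
  calc Nat.card {B : Finset (Finset (Fin n)) // IsSTS n B ∧ IsSTSAuto n B g}
      ≤ Nat.card (Fin L → Fin n) := Nat.card_le_card_of_injective _ hinj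
    _ = n ^ L := by simp [Nat.card_eq_fintype_card]

end STSCount
namespace STSCount

variable {n : ℕ} {g : Equiv.Perm (Fin n)} {B : Finset (Finset (Fin n))}

lemma pairs_bound (hB : IsSTS n B) {S : Finset (Finset (Fin n))} (hS : S ⊆ B)
    {V : Finset (Fin n)} (hV : ∀ b ∈ S, b ⊆ V) : 3 * S.card ≤ V.card.choose 2 := by
  have hdisj : ∀ x ∈ S, ∀ y ∈ S, x ≠ y →
      Disjoint (x.powersetCard 2) (y.powersetCard 2) := by
    intro x hx y hy hxy
    rw [Finset.disjoint_left]
    intro q hqx hqy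
    rw [Finset.mem_powersetCard] at hqx hqy
    exact hxy (blk_unique hB hqx.2 (hS hx) hqx.1 (hS hy) hqy.1)
  have hcard := Finset.card_biUnion hdisj
  have hsub : S.biUnion (fun b => b.powersetCard 2) ⊆ V.powersetCard 2 := by
    intro q hq
    rcases Finset.mem_biUnion.1 hq with ⟨b, hb, hqb⟩
    rw [Finset.mem_powersetCard] at hqb ⊢
    exact ⟨hqb.1.trans (hV b hb), hqb.2⟩
  have hsum : ∑ b ∈ S, (b.powersetCard 2).card = 3 * S.card := by
    rw [Finset.sum_congr rfl (fun b hb => show (b.powersetCard 2).card = 3 by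
      rw [Finset.card_powersetCard, hB.1 b (hS hb)]; decide),
      Finset.sum_const, smul_eq_mul, mul_comm]
  calc 3 * S.card = (S.biUnion (fun b => b.powersetCard 2)).card := by rw [hcard, hsum]
    _ ≤ (V.powersetCard 2).card := Finset.card_le_card hsub
    _ = V.card.choose 2 := Finset.card_powersetCard 2 V

lemma block_card_bound (hB : IsSTS n B) : 3 * B.card ≤ n.choose 2 := by
  have := pairs_bound hB (le_refl B) (fun b _ => Finset.subset_univ b)
  simpa using this

/-- Pointwise fixed blocks. -/
lemma pointwise_bound (hB : IsSTS n B) :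
    3 * (B.filter (fun b => ∀ x ∈ b, g x = x)).card ≤
      ((Finset.univ : Finset (Fin n)).filter (fun x => g x = x)).card.choose 2 := by
  refine pairs_bound hB (Finset.filter_subset _ _) ?_
  intro b hb x hx
  rw [Finset.mem_filter] at hb
  exact Finset.mem_filter.2 ⟨Finset.mem_univ x, hb.2 x hx⟩

lemma moved_block_bound (hB : IsSTS n B) :
    2 * ((B.filter (fun b => b.image ⇑g = b)).filter (fun b => ¬∀ x ∈ b, g x = x)).card ≤
      ((Finset.univ : Finset (Fin n)).filter (fun x => ¬g x = x)).card := by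
  set S := (B.filter (fun b => b.image ⇑g = b)).filter (fun b => ¬∀ x ∈ b, g x = x) with hSdef
  have hSB : S ⊆ B := (Finset.filter_subset _ _).trans (Finset.filter_subset _ _)
  have hfix : ∀ b ∈ S, b.image ⇑g = b := by
    intro b hb
    exact (Finset.mem_filter.1 ((Finset.filter_subset _ _) hb)).2
  have hmoved : ∀ b ∈ S, ∃ x ∈ b, ¬ g x = x := by
    intro b hb
    have := (Finset.mem_filter.1 hb).2
    push_neg at this
    exact this
  have hdisj : ∀ x ∈ S, ∀ y ∈ S, x ≠ y →
      Disjoint (x.filter (fun z => ¬g z = z)) (y.filter (fun z => ¬g z = z)) := by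
    intro b hb c hc hbc
    rw [Finset.disjoint_left]
    intro z hzb hzc
    rw [Finset.mem_filter] at hzb hzc
    have hgzb : g z ∈ b := by rw [← hfix b hb]; exact Finset.mem_image_of_mem _ hzb.1
    have hgzc : g z ∈ c := by rw [← hfix c hc]; exact Finset.mem_image_of_mem _ hzc.1
    have hpair : ({z, g z} : Finset (Fin n)).card = 2 := by
      rw [Finset.card_insert_of_notMem (by simpa using (Ne.symm hzb.2)), Finset.card_singleton]
    refine hbc (blk_unique hB hpair (hSB hb) ?_ (hSB hc) ?_)
    · exact Finset.insert_subset hzb.1 (Finset.singleton_subset_iff.2 hgzb)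
    · exact Finset.insert_subset hzc.1 (Finset.singleton_subset_iff.2 hgzc)
  have htwo : ∀ b ∈ S, 2 ≤ (b.filter (fun z => ¬g z = z)).card := by
    intro b hb
    rcases hmoved b hb with ⟨x, hxb, hgx⟩
    have hgxb : g x ∈ b := by rw [← hfix b hb]; exact Finset.mem_image_of_mem _ hxb
    have hggx : ¬ g (g x) = g x := fun h => hgx (g.injective h)
    have hsub : ({x, g x} : Finset (Fin n)) ⊆ b.filter (fun z => ¬g z = z) := by
      intro z hz
      rcases Finset.mem_insert.1 hz with rfl | hz
      · exact Finset.mem_filter.2 ⟨hxb, hgx⟩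
      · rw [Finset.mem_singleton] at hz
        subst hz
        exact Finset.mem_filter.2 ⟨hgxb, hggx⟩
    have : ({x, g x} : Finset (Fin n)).card = 2 := by
      rw [Finset.card_insert_of_notMem (by simpa using (Ne.symm hgx)), Finset.card_singleton]
    calc 2 = ({x, g x} : Finset (Fin n)).card := this.symm
      _ ≤ _ := Finset.card_le_card hsub
  have hcard := Finset.card_biUnion hdisj
  have hsub : S.biUnion (fun b => b.filter (fun z => ¬g z = z)) ⊆
      (Finset.univ : Finset (Fin n)).filter (fun x => ¬g x = x) := by
    intro z hz
    rcases Finset.mem_biUnion.1 hz with ⟨b, hb, hzb⟩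
    exact Finset.mem_filter.2 ⟨Finset.mem_univ z, (Finset.mem_filter.1 hzb).2⟩
  calc 2 * S.card = ∑ _b ∈ S, 2 := by rw [Finset.sum_const, smul_eq_mul, mul_comm]
    _ ≤ ∑ b ∈ S, (b.filter (fun z => ¬g z = z)).card := Finset.sum_le_sum htwo
    _ = (S.biUnion (fun b => b.filter (fun z => ¬g z = z))).card := hcard.symm
    _ ≤ _ := Finset.card_le_card hsub

lemma orbit_count_bound (hB : IsSTS n B) (hauto : IsSTSAuto n B g) :
    2 * (B.image (orbF g)).card ≤ B.card + (B.filter (fun b => b.image ⇑g = b)).card := by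
  set O := B.image (orbF g) with hO
  set Fxd := B.filter (fun b => b.image ⇑g = b) with hFxd
  set FxIm := Fxd.image (orbF g) with hFxIm
  have hsum : B.card = ∑ o ∈ O, (B.filter (fun b => orbF g b = o)).card :=
    Finset.card_eq_sum_card_fiberwise (fun b hb => Finset.mem_image_of_mem _ hb)
  have hper : ∀ o ∈ O, 2 ≤ (B.filter (fun b => orbF g b = o)).card +
      (if o ∈ FxIm then 1 else 0) := by
    intro o ho
    rcases Finset.mem_image.1 ho with ⟨b, hb, rfl⟩
    by_cases hbf : b.image ⇑g = b
    · have : orbF g b ∈ FxIm :=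
        Finset.mem_image_of_mem _ (Finset.mem_filter.2 ⟨hb, hbf⟩)
      rw [if_pos this]
      have : b ∈ B.filter (fun c => orbF g c = orbF g b) := Finset.mem_filter.2 ⟨hb, rfl⟩
      have := Finset.card_pos.2 ⟨b, this⟩
      omega
    · have hgB : b.image ⇑g ∈ B := hauto b hb
      have hgo : orbF g (b.image ⇑g) = orbF g b := by
        refine orbF_eq_of_mem ?_
        have := image_pow_mem_orbF (self_mem_orbF (g := g) (b := b)) 1
        simpa using this
      have h2 : 1 < (B.filter (fun c => orbF g c = orbF g b)).card := by
        refine Finset.one_lt_card.2 ⟨b, Finset.mem_filter.2 ⟨hb, rfl⟩,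
          b.image ⇑g, Finset.mem_filter.2 ⟨hgB, hgo⟩, fun h => hbf h.symm⟩
      omega
  have hite : ∑ o ∈ O, (if o ∈ FxIm then (1:ℕ) else 0) ≤ Fxd.card := by
    rw [Finset.sum_boole]
    have h1 : (O.filter (fun o => o ∈ FxIm)) ⊆ FxIm := fun o ho =>
      (Finset.mem_filter.1 ho).2
    calc ((O.filter (fun o => o ∈ FxIm)).card : ℕ) ≤ FxIm.card := Finset.card_le_card h1
      _ ≤ Fxd.card := Finset.card_image_le
  calc 2 * O.card = ∑ _o ∈ O, 2 := by rw [Finset.sum_const, smul_eq_mul, mul_comm]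
    _ ≤ ∑ o ∈ O, ((B.filter (fun b => orbF g b = o)).card + (if o ∈ FxIm then 1 else 0)) :=
        Finset.sum_le_sum hper
    _ = ∑ o ∈ O, (B.filter (fun b => orbF g b = o)).card +
        ∑ o ∈ O, (if o ∈ FxIm then (1:ℕ) else 0) := Finset.sum_add_distrib
    _ ≤ B.card + Fxd.card := by rw [← hsum]; exact Nat.add_le_add_left hite _

end STSCount
namespace STSCount

variable {n : ℕ} {g : Equiv.Perm (Fin n)} {B : Finset (Finset (Fin n))}

lemma third_mem_sdiff {e0 : Fin n} {b p : Finset (Fin n)} (hpb : p ⊆ b) (hp : p.card = 2)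
    (hb : b.card = 3) : third e0 b p ∈ b \ p := by
  have hcard : (b \ p).card = 1 := by
    rw [Finset.card_sdiff_of_subset hpb, hb, hp]
  have hne : (b \ p).Nonempty := by
    rw [← Finset.card_pos, hcard]; norm_num
  rw [third, dif_pos hne]
  exact Finset.min'_mem _ _

lemma fixed_points_bound (hB : IsSTS n B) (hauto : IsSTSAuto n B g) (hg1 : g ≠ 1)
    (hf : 1 ≤ ((Finset.univ : Finset (Fin n)).filter (fun x => g x = x)).card) :
    ((Finset.univ : Finset (Fin n)).filter (fun x => g x = x)).card + 1 ≤
      ((Finset.univ : Finset (Fin n)).filter (fun x => ¬g x = x)).card := by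
  set F := (Finset.univ : Finset (Fin n)).filter (fun x => g x = x) with hF
  set M := (Finset.univ : Finset (Fin n)).filter (fun x => ¬g x = x) with hM
  obtain ⟨x₀, hx₀⟩ : ∃ x : Fin n, ¬ g x = x := by
    by_contra h
    push_neg at h
    exact hg1 (Equiv.ext h)
  have hx₀M : x₀ ∈ M := Finset.mem_filter.2 ⟨Finset.mem_univ _, hx₀⟩
  classical
  set bfun : Fin n → Finset (Fin n) :=
    fun u => if h : ∃ b ∈ B, ({x₀, u} : Finset (Fin n)) ⊆ b then h.choose else ∅ with hbfun
  set wfun : Fin n → Fin n := fun u => third x₀ (bfun u) {x₀, u} with hwfun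
  have spec : ∀ u ∈ F, bfun u ∈ B ∧ ({x₀, u} : Finset (Fin n)) ⊆ bfun u ∧
      insert (wfun u) ({x₀, u} : Finset (Fin n)) = bfun u ∧ wfun u ∈ M.erase x₀ := by
    intro u hu
    have hgu : g u = u := (Finset.mem_filter.1 hu).2
    have hne : x₀ ≠ u := fun h => hx₀ (by rw [h]; exact hgu)
    have hp : ({x₀, u} : Finset (Fin n)).card = 2 := by
      rw [Finset.card_insert_of_notMem (by simpa using hne), Finset.card_singleton]
    have hex : ∃ b ∈ B, ({x₀, u} : Finset (Fin n)) ⊆ b := (hB.2 _ hp).exists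
    have hbeq : bfun u = hex.choose := by rw [hbfun]; simp only [dif_pos hex]
    obtain ⟨hbB, hbsub⟩ := hex.choose_spec
    rw [← hbeq] at hbB hbsub
    have hb3 : (bfun u).card = 3 := hB.1 _ hbB
    have hins : insert (wfun u) ({x₀, u} : Finset (Fin n)) = bfun u :=
      insert_third hbsub hp hb3
    have hwsd := third_mem_sdiff (e0 := x₀) hbsub hp hb3
    rw [Finset.mem_sdiff] at hwsd
    have hwb : wfun u ∈ bfun u := hwsd.1
    have hwp : wfun u ∉ ({x₀, u} : Finset (Fin n)) := hwsd.2
    have hwx₀ : wfun u ≠ x₀ := fun h => hwp (by rw [h]; exact Finset.mem_insert_self _ _)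
    have hwu : wfun u ≠ u := fun h => hwp (by rw [h]; simp)
    have hwM : ¬ g (wfun u) = wfun u := by
      intro hgw
      have hx₀b : x₀ ∈ bfun u := hbsub (Finset.mem_insert_self _ _)
      have hub : u ∈ bfun u := hbsub (by simp)
      have huw : ({u, wfun u} : Finset (Fin n)).card = 2 := by
        rw [Finset.card_insert_of_notMem (by simpa using (Ne.symm hwu)),
          Finset.card_singleton]
      have h1 : ({u, wfun u} : Finset (Fin n)) ⊆ bfun u :=
        Finset.insert_subset hub (Finset.singleton_subset_iff.2 hwb)
      have h2 : ({u, wfun u} : Finset (Fin n)) ⊆ (bfun u).image ⇑g := by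
        refine Finset.insert_subset ?_ (Finset.singleton_subset_iff.2 ?_)
        · exact Finset.mem_image.2 ⟨u, hub, hgu⟩
        · exact Finset.mem_image.2 ⟨wfun u, hwb, hgw⟩
      have himg : (bfun u).image ⇑g = bfun u :=
        blk_unique hB huw (hauto _ hbB) h2 hbB h1
      have hgx₀ : g x₀ ∈ bfun u := by
        rw [← himg]; exact Finset.mem_image_of_mem _ hx₀b
      rw [← hins] at hgx₀
      rcases Finset.mem_insert.1 hgx₀ with h | h
      · have h2 := g.injective (h.trans hgw.symm)
        exact hx₀ (by rw [h2]; exact hgw)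
      · rcases Finset.mem_insert.1 h with h' | h'
        · exact hx₀ h'
        · rw [Finset.mem_singleton] at h'
          exact hne (g.injective (h'.trans hgu.symm))
    exact ⟨hbB, hbsub, hins, Finset.mem_erase.2 ⟨hwx₀,
      Finset.mem_filter.2 ⟨Finset.mem_univ _, hwM⟩⟩⟩
  have hmaps : ∀ u ∈ F, wfun u ∈ M.erase x₀ := fun u hu => (spec u hu).2.2.2
  have hinj : Set.InjOn wfun ↑F := by
    intro u hu u' hu' heq
    obtain ⟨hbB, hbsub, hins, hwM⟩ := spec u (by simpa using hu)
    obtain ⟨hbB', hbsub', hins', hwM'⟩ := spec u' (by simpa using hu')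
    have hwx₀ : wfun u ≠ x₀ := (Finset.mem_erase.1 hwM).1
    have hq : ({x₀, wfun u} : Finset (Fin n)).card = 2 := by
      rw [Finset.card_insert_of_notMem (by simpa using (Ne.symm hwx₀)),
        Finset.card_singleton]
    have hq1 : ({x₀, wfun u} : Finset (Fin n)) ⊆ bfun u := by
      refine Finset.insert_subset (hbsub (Finset.mem_insert_self _ _)) ?_
      refine Finset.singleton_subset_iff.2 ?_
      rw [← hins]; exact Finset.mem_insert_self _ _
    have hq2 : ({x₀, wfun u} : Finset (Fin n)) ⊆ bfun u' := by
      refine Finset.insert_subset (hbsub' (Finset.mem_insert_self _ _)) ?_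
      refine Finset.singleton_subset_iff.2 ?_
      rw [heq, ← hins']; exact Finset.mem_insert_self _ _
    have hbb : bfun u = bfun u' := blk_unique hB hq hbB hq1 hbB' hq2
    have hu'mem : u' ∈ insert (wfun u) ({x₀, u} : Finset (Fin n)) := by
      rw [hins, hbb, ← hins']
      exact Finset.mem_insert_of_mem (by simp)
    have hgu' : g u' = u' := (Finset.mem_filter.1 (Finset.mem_coe.1 hu')).2
    rcases Finset.mem_insert.1 hu'mem with h | h
    · exfalso
      have : ¬ g (wfun u) = wfun u := (Finset.mem_filter.1 (Finset.mem_of_mem_erase hwM)).2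
      rw [← h] at this
      exact this hgu'
    · rcases Finset.mem_insert.1 h with h' | h'
      · exfalso
        have hgu : g u = u := (Finset.mem_filter.1 (Finset.mem_coe.1 hu)).2
        subst h'
        exact hx₀ (by simpa using hgu')
      · rw [Finset.mem_singleton] at h'
        exact h'.symm
  have hle : F.card ≤ (M.erase x₀).card :=
    Finset.card_le_card_of_injOn wfun hmaps hinj
  rw [Finset.card_erase_of_mem hx₀M] at hle
  have hM1 : 1 ≤ M.card := Finset.card_pos.2 ⟨x₀, hx₀M⟩
  omega

end STSCount
namespace STSCount

variable {n : ℕ} {g : Equiv.Perm (Fin n)} {B : Finset (Finset (Fin n))}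

lemma T_le (hn : 3 ≤ n) (hB : IsSTS n B) (hauto : IsSTSAuto n B g) (hg1 : g ≠ 1) :
    48 * (B.image (orbF g)).card ≤ 5 * n ^ 2 + 4 * n + 3 := by
  classical
  set T := (B.image (orbF g)).card with hT
  set Bc := B.card with hBc
  set Fxd := B.filter (fun b => b.image ⇑g = b) with hFxd
  set Fp := (B.filter (fun b => ∀ x ∈ b, g x = x)).card with hFp
  set Sm := (Fxd.filter (fun b => ¬∀ x ∈ b, g x = x)).card with hSm
  set f := ((Finset.univ : Finset (Fin n)).filter (fun x => g x = x)).card with hf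
  set m := ((Finset.univ : Finset (Fin n)).filter (fun x => ¬g x = x)).card with hm
  have h1 : 2 * T ≤ Bc + Fxd.card := orbit_count_bound hB hauto
  have hsplit : Fxd.card ≤ Fp + Sm := by
    have heq := Finset.card_filter_add_card_filter_not
      (s := Fxd) (p := fun b => ∀ x ∈ b, g x = x)
    have hsub : Fxd.filter (fun b => ∀ x ∈ b, g x = x) ⊆
        B.filter (fun b => ∀ x ∈ b, g x = x) := by
      intro b hb
      rw [Finset.mem_filter] at hb ⊢
      exact ⟨(Finset.mem_filter.1 hb.1).1, hb.2⟩
    have := Finset.card_le_card hsub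
    omega
  have h3 : 3 * Bc ≤ n.choose 2 := block_card_bound hB
  have h4 : 3 * Fp ≤ f.choose 2 := pointwise_bound hB
  have h5 : 2 * Sm ≤ m := moved_block_bound hB
  have h6 : f + m = n := by
    have := Finset.card_filter_add_card_filter_not
      (s := (Finset.univ : Finset (Fin n))) (p := fun x => g x = x)
    simpa using this
  have h7 : f = 0 ∨ (1 ≤ f ∧ f + 1 ≤ m) := by
    by_cases hf0 : f = 0
    · exact Or.inl hf0
    · exact Or.inr ⟨Nat.pos_of_ne_zero hf0,
        fixed_points_bound hB hauto hg1 (Nat.pos_of_ne_zero hf0)⟩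
  -- move to ℝ
  have hc3 : (3:ℝ) * Bc ≤ (n:ℝ) * ((n:ℝ) - 1) / 2 := by
    calc (3:ℝ) * Bc ≤ (n.choose 2 : ℝ) := by exact_mod_cast h3
      _ = (n:ℝ) * ((n:ℝ) - 1) / 2 := Nat.cast_choose_two ℝ n
  have hc4 : (3:ℝ) * Fp ≤ (f:ℝ) * ((f:ℝ) - 1) / 2 := by
    calc (3:ℝ) * Fp ≤ (f.choose 2 : ℝ) := by exact_mod_cast h4
      _ = (f:ℝ) * ((f:ℝ) - 1) / 2 := Nat.cast_choose_two ℝ f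
  have hc1 : (2:ℝ) * T ≤ (Bc:ℝ) + (Fp:ℝ) + (Sm:ℝ) := by
    have : (2:ℝ) * T ≤ (Bc:ℝ) + (Fxd.card:ℝ) := by exact_mod_cast h1
    have h2 : (Fxd.card:ℝ) ≤ (Fp:ℝ) + (Sm:ℝ) := by exact_mod_cast hsplit
    linarith
  have hc5 : (2:ℝ) * Sm ≤ (m:ℝ) := by exact_mod_cast h5
  have hc6 : (f:ℝ) + (m:ℝ) = (n:ℝ) := by exact_mod_cast h6
  have hcn : (3:ℝ) ≤ (n:ℝ) := by exact_mod_cast hn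
  have goalR : (48:ℝ) * T ≤ 5 * (n:ℝ) ^ 2 + 4 * n + 3 := by
    rcases h7 with hf0 | hf1
    · have hch : f.choose 2 = 0 := by rw [hf0]; decide
      have hFp0n : Fp = 0 := by omega
      have hFp0 : (Fp:ℝ) = 0 := by exact_mod_cast hFp0n
      have hfz : (f:ℝ) = 0 := by exact_mod_cast hf0
      nlinarith [mul_nonneg (sub_nonneg.2 (by linarith : (1:ℝ) ≤ (n:ℝ)))
        (sub_nonneg.2 (by linarith : (3:ℝ) ≤ (n:ℝ)))]
    · have hcf1 : (f:ℝ) + 1 ≤ (m:ℝ) := by exact_mod_cast hf1.2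
      have hcfpos : (1:ℝ) ≤ (f:ℝ) := by exact_mod_cast hf1.1
      have key : 4 * (f:ℝ) * ((f:ℝ) - 1) ≤ ((n:ℝ) - 1) * ((n:ℝ) - 3) := by
        nlinarith [hcf1, hc6, hcfpos]
      nlinarith [key, hc1, hc3, hc4, hc5, hc6, hcfpos]
  exact_mod_cast goalR

end STSCount

theorem count_sts_fixed_by_perm (n : ℕ) (g : Equiv.Perm (Fin n)) (hg1 : g ≠ 1) :
    (Nat.card {B : Finset (Finset (Fin n)) //
        IsSTS n B ∧ IsSTSAuto n B g} : ℝ) ≤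
      (8 * (n : ℝ) * Real.exp 1 / 5) ^ (5 * (n : ℝ) ^ 2 / 48) := by
  classical
  by_cases hn : 3 ≤ n
  · -- main case
    have hn0 : 0 < n := by omega
    set e0 : Fin n := ⟨0, hn0⟩ with he0
    set L : ℕ := (5 * n ^ 2 + 4 * n + 3) / 48 with hL
    have hcount : Nat.card {B : Finset (Finset (Fin n)) //
        IsSTS n B ∧ IsSTSAuto n B g} ≤ n ^ L := by
      refine STSCount.card_le_pow g e0 L ?_
      intro B hB hauto
      have := STSCount.T_le hn hB hauto hg1
      rw [hL]
      omega
    have hLR : (L:ℝ) ≤ (5 * (n:ℝ) ^ 2 + 4 * n + 3) / 48 := by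
      calc (L:ℝ) ≤ ((5 * n ^ 2 + 4 * n + 3 : ℕ) : ℝ) / ((48:ℕ):ℝ) := Nat.cast_div_le
        _ = (5 * (n:ℝ) ^ 2 + 4 * n + 3) / 48 := by push_cast; ring
    have hnR : (3:ℝ) ≤ (n:ℝ) := by exact_mod_cast hn
    have hnpos : (0:ℝ) < (n:ℝ) := by linarith
    have hbase : (0:ℝ) < 8 * (n:ℝ) * Real.exp 1 / 5 := by
      have := Real.exp_pos 1
      positivity
    have hlogn : (0:ℝ) ≤ Real.log n := Real.log_nonneg (by linarith)
    have hlogb : Real.log n + 1 ≤ Real.log (8 * (n:ℝ) * Real.exp 1 / 5) := by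
      have h8 : (8 * (n:ℝ) * Real.exp 1 / 5) = (n:ℝ) * (8 * Real.exp 1 / 5) := by ring
      rw [h8, Real.log_mul (ne_of_gt hnpos) (by positivity)]
      have : Real.exp 1 ≤ 8 * Real.exp 1 / 5 := by
        have := Real.exp_pos 1
        linarith
      have hlog2 : 1 ≤ Real.log (8 * Real.exp 1 / 5) := by
        calc (1:ℝ) = Real.log (Real.exp 1) := (Real.log_exp 1).symm
          _ ≤ _ := Real.log_le_log (Real.exp_pos 1) this
      linarith
    have hlogle : Real.log n ≤ (n:ℝ) - 1 := Real.log_le_sub_one_of_pos hnpos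
    have hmain : (L:ℝ) * Real.log n ≤
        (5 * (n:ℝ) ^ 2 / 48) * Real.log (8 * (n:ℝ) * Real.exp 1 / 5) := by
      have s1 : (L:ℝ) * Real.log n ≤ ((5 * (n:ℝ)^2 + 4*n + 3)/48) * Real.log n :=
        mul_le_mul_of_nonneg_right hLR hlogn
      have s2 : ((5 * (n:ℝ)^2 + 4*n + 3)/48) * Real.log n ≤
          (5 * (n:ℝ)^2/48) * (Real.log n + 1) := by
        have hpos : (0:ℝ) ≤ 4*(n:ℝ) + 3 := by linarith
        have hq : ((4:ℝ)*n+3) * Real.log n ≤ (4*(n:ℝ)+3) * ((n:ℝ)-1) :=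
          mul_le_mul_of_nonneg_left hlogle hpos
        nlinarith [hq, hlogn, hnR]
      have s3 : (5 * (n:ℝ)^2/48) * (Real.log n + 1) ≤
          (5 * (n:ℝ)^2/48) * Real.log (8 * (n:ℝ) * Real.exp 1 / 5) := by
        refine mul_le_mul_of_nonneg_left hlogb (by positivity)
      linarith
    calc (Nat.card {B : Finset (Finset (Fin n)) // IsSTS n B ∧ IsSTSAuto n B g} : ℝ)
        ≤ ((n ^ L : ℕ) : ℝ) := by exact_mod_cast hcount
      _ = (n:ℝ) ^ (L:ℝ) := by
          rw [Real.rpow_natCast]; push_cast; ring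
      _ ≤ (8 * (n:ℝ) * Real.exp 1 / 5) ^ (5 * (n:ℝ) ^ 2 / 48) := by
          rw [Real.rpow_def_of_pos hnpos, Real.rpow_def_of_pos hbase]
          exact Real.exp_le_exp.2 (by linarith [hmain])
  · -- degenerate cases n ≤ 2
    have hempty : IsEmpty {B : Finset (Finset (Fin n)) // IsSTS n B ∧ IsSTSAuto n B g} := by
      constructor
      rintro ⟨B, hB, -⟩
      by_cases h1 : n ≤ 1
      · apply hg1
        apply Equiv.ext
        intro x
        have : ∀ x y : Fin n, x = y := by
          intro x y
          have hx := x.2; have hy := y.2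
          apply Fin.ext
          omega
        exact this _ _
      · have hn2 : n = 2 := by omega
        subst hn2
        have hp : ({0, 1} : Finset (Fin 2)).card = 2 := by decide
        obtain ⟨b, ⟨hbB, -⟩, -⟩ := hB.2 _ hp
        have h3 := hB.1 b hbB
        have h4 : b.card ≤ 2 := by
          have := Finset.card_le_card (Finset.subset_univ b)
          simpa using this
        omega
    haveI := hempty
    rw [Nat.card_of_isEmpty]
    norm_num
    exact Real.rpow_nonneg (by positivity) _
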